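/- Let β and π be policies (functions from states to probability distributions over actions) and x_β(s_t), x_π(s_t) be their realization plans, i.e., the product of the policy's probabilities of its own actions along the path to state s_t. Define for α ∈ [0,1] the policy μ(a|s) = (1−λ(s)) π(a|s) + λ(s) β(a|s) where λ(s) = α x_β(s) / ((1−α) x_π(s) + α x_β(s)) (assume the denominator is positive). Then the realization plan of μ satisfies x_μ(s) = (1−α) x_π(s) + α x_β(s) for every state s. -/
import Mathlib


/-- States are modeled as finite histories of the player's own actions in a
tree (latest action first); a policy maps a history to action probabilities.
`realize π s` is the realization plan: the product of `π`'s probabilities of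
its own actions along the path to `s`. -/
def realize {A : Type*} (π : List A → A → ℝ) : List A → ℝ
  | [] => 1
  | a :: s => realize π s * π s a

/-- realization equivalence: the FSP mixture policy `μ` with
`λ(s) = α x_β(s) / ((1−α) x_π(s) + α x_β(s))` has realization plan
`x_μ(s) = (1−α) x_π(s) + α x_β(s)` at every state. -/
theorem realization_equivalence {A : Type*} (π β : List A → A → ℝ)
    (α : ℝ) (hα0 : 0 ≤ α) (hα1 : α ≤ 1)
    (hden : ∀ s : List A, 0 < (1 - α) * realize π s + α * realize β s)
    (μ : List A → A → ℝ)
    (hμ : ∀ s a, μ s a =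
      (1 - α * realize β s / ((1 - α) * realize π s + α * realize β s)) * π s a +
      (α * realize β s / ((1 - α) * realize π s + α * realize β s)) * β s a) :
    ∀ s : List A, realize μ s = (1 - α) * realize π s + α * realize β s := by
  intro s
  induction s with
  | nil => simp [realize]
  | cons a t ih =>
    have hd := (hden t).ne'
    simp only [realize, ih, hμ]
    field_simp
    ring
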